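/- The function x ↦ x⁴ eˣ/(eˣ − 1)² is integrable on (0, ∞) and ∫₀^∞ x⁴ eˣ/(eˣ − 1)² dx = 4π⁴/15. -/

import Mathlib

open MeasureTheory Real Set

noncomputable def F (n : ℕ) (x : ℝ) : ℝ := x ^ 4 * (((n : ℝ) + 1) * Real.exp (-(((n : ℝ) + 1) * x)))

lemma F_nonneg (n : ℕ) (x : ℝ) : 0 ≤ F n x := by
  unfold F
  positivity

lemma F_integrable (n : ℕ) : IntegrableOn (F n) (Ioi (0 : ℝ)) volume := by
  have h := integrableOn_rpow_mul_exp_neg_mul_rpow (p := 1) (s := 4) (b := (n : ℝ) + 1)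
    (by norm_num) (by norm_num) (by positivity)
  have h' : IntegrableOn (fun x : ℝ => x ^ (4 : ℕ) * Real.exp (-(((n : ℝ) + 1) * x)))
      (Ioi (0 : ℝ)) volume := by
    refine h.congr_fun (fun x _ => ?_) measurableSet_Ioi
    dsimp only
    rw [Real.rpow_one, show ((4:ℝ)) = ((4:ℕ):ℝ) by norm_num, Real.rpow_natCast]
    ring_nf
  have h2 : IntegrableOn (fun x : ℝ => ((n : ℝ) + 1) * (x ^ 4 * Real.exp (-(((n : ℝ) + 1) * x))))
      (Ioi (0 : ℝ)) volume := h'.const_mul ((n : ℝ) + 1)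
  refine h2.congr_fun (fun x _ => ?_) measurableSet_Ioi
  unfold F
  ring

lemma F_integral (n : ℕ) : ∫ x in Ioi (0 : ℝ), F n x = 24 / ((n : ℝ) + 1) ^ 4 := by
  have hr : (0 : ℝ) < (n : ℝ) + 1 := by positivity
  have h := Real.integral_rpow_mul_exp_neg_mul_Ioi (a := 5) (r := (n : ℝ) + 1)
    (by norm_num) hr
  have heq : ∀ x ∈ Ioi (0 : ℝ), x ^ ((5 : ℝ) - 1) * Real.exp (-(((n : ℝ) + 1) * x))
      = x ^ (4 : ℕ) * Real.exp (-(((n : ℝ) + 1) * x)) := by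
    intro x hx
    have : ((5 : ℝ) - 1) = ((4 : ℕ) : ℝ) := by norm_num
    rw [this, Real.rpow_natCast]
  rw [setIntegral_congr_fun measurableSet_Ioi heq] at h
  have hG : Real.Gamma 5 = 24 := by
    rw [show (5:ℝ) = (4:ℕ)+1 by norm_num, Real.Gamma_nat_eq_factorial]
    norm_num [Nat.factorial]
  calc ∫ x in Ioi (0 : ℝ), F n x
      = ((n : ℝ) + 1) * ∫ x in Ioi (0 : ℝ), x ^ (4 : ℕ) * Real.exp (-(((n : ℝ) + 1) * x)) := by
        rw [← integral_const_mul]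
        exact setIntegral_congr_fun measurableSet_Ioi (fun x _ => by unfold F; ring)
    _ = ((n : ℝ) + 1) * ((1 / ((n : ℝ) + 1)) ^ (5 : ℝ) * Real.Gamma 5) := by rw [h]
    _ = 24 / ((n : ℝ) + 1) ^ 4 := by
        rw [hG, show ((5:ℝ)) = ((5:ℕ):ℝ) by norm_num, Real.rpow_natCast]
        field_simp

lemma F_hasSum {x : ℝ} (hx : 0 < x) :
    HasSum (fun n => F n x) (x ^ 4 * Real.exp x / (Real.exp x - 1) ^ 2) := by
  set r : ℝ := Real.exp (-x) with hr
  have hr1 : ‖r‖ < 1 := by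
    rw [Real.norm_eq_abs, abs_of_pos (Real.exp_pos _)]
    exact Real.exp_lt_one_iff.mpr (by linarith)
  have h0 : HasSum (fun n : ℕ => (n : ℝ) * r ^ n) (r / (1 - r) ^ 2) :=
    hasSum_coe_mul_geometric_of_norm_lt_one hr1
  have h1 : HasSum (fun n : ℕ => ((n + 1 : ℕ) : ℝ) * r ^ (n + 1)) (r / (1 - r) ^ 2) := by
    have := (hasSum_nat_add_iff' (f := fun n : ℕ => (n : ℝ) * r ^ n) 1).mpr h0
    simpa using this
  have h2 := h1.mul_left (x ^ 4)
  have hE : (1 : ℝ) < Real.exp x := by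
    rw [← Real.exp_zero]; exact Real.exp_lt_exp.mpr hx
  have hvalue : x ^ 4 * (r / (1 - r) ^ 2) = x ^ 4 * Real.exp x / (Real.exp x - 1) ^ 2 := by
    have hne : Real.exp x ≠ 0 := (Real.exp_pos x).ne'
    have hne1 : Real.exp x - 1 ≠ 0 := by linarith
    rw [hr, Real.exp_neg]
    field_simp
  rw [hvalue] at h2
  refine h2.congr_fun fun n => ?_
  unfold F
  rw [hr, ← Real.exp_nat_mul]
  push_cast
  ring_nf

lemma sum_integrals : HasSum (fun n : ℕ => (24 : ℝ) / ((n : ℝ) + 1) ^ 4) (4 * π ^ 4 / 15) := by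
  have h0 := hasSum_zeta_four
  have h1 : HasSum (fun n : ℕ => (1 : ℝ) / ((n + 1 : ℕ) : ℝ) ^ 4) (π ^ 4 / 90) := by
    have := (hasSum_nat_add_iff' (f := fun n : ℕ => (1 : ℝ) / (n : ℝ) ^ 4) 1).mpr h0
    simpa using this
  have h2 := h1.mul_left 24
  have : (24 : ℝ) * (π ^ 4 / 90) = 4 * π ^ 4 / 15 := by ring
  rw [this] at h2
  refine h2.congr_fun fun n => ?_
  push_cast
  ring

theorem bose_derivative_integral :
    IntegrableOn (fun x : ℝ => x ^ 4 * Real.exp x / (Real.exp x - 1) ^ 2)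
      (Set.Ioi (0 : ℝ)) volume ∧
    (∫ x in Set.Ioi (0 : ℝ), x ^ 4 * Real.exp x / (Real.exp x - 1) ^ 2) = 4 * π ^ 4 / 15 := by
  have htgt_nonneg : ∀ x : ℝ, 0 ≤ x ^ 4 * Real.exp x / (Real.exp x - 1) ^ 2 := fun x => by
    positivity
  have hnorm : ∀ n : ℕ, (∫ x in Ioi (0 : ℝ), ‖F n x‖) = 24 / ((n : ℝ) + 1) ^ 4 := by
    intro n
    rw [← F_integral n]
    exact integral_congr_ae (Filter.Eventually.of_forall fun x =>
      Real.norm_of_nonneg (F_nonneg n x))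
  have hsum : Summable fun n : ℕ => ∫ x in Ioi (0 : ℝ), ‖F n x‖ := by
    simp_rw [hnorm]
    exact sum_integrals.summable
  have key := integral_tsum_of_summable_integral_norm (μ := volume.restrict (Ioi (0:ℝ)))
    (fun n => F_integrable n) hsum
  have htsum_eq : ∀ x ∈ Ioi (0 : ℝ),
      (∑' n, F n x) = x ^ 4 * Real.exp x / (Real.exp x - 1) ^ 2 :=
    fun x hx => (F_hasSum hx).tsum_eq
  have hintegral : (∫ x in Set.Ioi (0 : ℝ), x ^ 4 * Real.exp x / (Real.exp x - 1) ^ 2)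
      = 4 * π ^ 4 / 15 := by
    rw [← setIntegral_congr_fun measurableSet_Ioi htsum_eq, ← key]
    simp_rw [F_integral]
    exact sum_integrals.tsum_eq
  refine ⟨?_, hintegral⟩
  constructor
  · apply Measurable.aestronglyMeasurable
    fun_prop
  · rw [hasFiniteIntegral_iff_ofReal (Filter.Eventually.of_forall htgt_nonneg)]
    have hcongr : ∫⁻ x in Ioi (0 : ℝ),
        ENNReal.ofReal (x ^ 4 * Real.exp x / (Real.exp x - 1) ^ 2)
        = ∫⁻ x in Ioi (0 : ℝ), ∑' n, ENNReal.ofReal (F n x) := by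
      refine setLIntegral_congr_fun measurableSet_Ioi
        (fun x hx => ?_)
      rw [← htsum_eq x hx, ENNReal.ofReal_tsum_of_nonneg (fun n => F_nonneg n x)
        (F_hasSum hx).summable]
    rw [hcongr, lintegral_tsum (fun n => by
      apply Measurable.aemeasurable
      apply ENNReal.measurable_ofReal.comp
      unfold F; fun_prop)]
    have heach : ∀ n : ℕ, ∫⁻ x in Ioi (0 : ℝ), ENNReal.ofReal (F n x)
        = ENNReal.ofReal (24 / ((n : ℝ) + 1) ^ 4) := by
      intro n
      rw [← ofReal_integral_eq_lintegral_ofReal (F_integrable n)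
        (Filter.Eventually.of_forall fun x => F_nonneg n x), F_integral]
    simp_rw [heach]
    rw [← ENNReal.ofReal_tsum_of_nonneg (fun n => by positivity) sum_integrals.summable]
    exact ENNReal.ofReal_lt_top
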